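/- Under the conditions of the greedy theorem, with α_i := g(X) - g(C_i) - p·opt where C_i is the greedy solution after i steps: if α_{i-1} > 0 then α_i ≤ e^{-w(b_i)/opt} · α_{i-1}, where b_i is the element added at step i. -/

import Mathlib

/-- one-step geometric decrease of `α_i = g(X) - g(C_i) - p·opt`
under the greedy choice. -/
theorem stmt_9 {X : Type*} [Fintype X] [DecidableEq X]
    (w : X → ℝ) (hw1 : ∀ v, 1 ≤ w v)
    (g : Finset X → ℝ) (hnonneg : ∀ S, 0 ≤ g S) (hmono : Monotone g)
    (hempty : g ∅ = 0)
    (Cstar : Finset X) (hfeas : g Cstar = g Finset.univ)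
    (opt : ℝ) (hopt : opt = ∑ v ∈ Cstar, w v)
    (p : ℝ) (hp : 0 ≤ p)
    (C : Finset X)
    -- condition (ii) for the current greedy set C
    (hii : ∃ (t : ℕ) (v : ℕ → X),
      Set.InjOn v (Set.Iio t) ∧
      (∀ i < t, v i ∈ Cstar \ C) ∧
      g (C ∪ (Finset.range t).image v) = g Finset.univ ∧
      (∀ t' < t, g (C ∪ (Finset.range t').image v) < g Finset.univ) ∧
      (∀ i < t, g (C ∪ (Finset.range (i + 1)).image v)
          - g (C ∪ (Finset.range i).image v) ≤ g (insert (v i) C) - g C + p))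
    -- b is the greedy choice at this step
    (b : X) (hb : b ∉ C)
    (hbmax : ∀ v ∈ Finset.univ \ C,
      (g (insert v C) - g C) / w v ≤ (g (insert b C) - g C) / w b)
    (hα : 0 < g Finset.univ - g C - p * opt) :
    g Finset.univ - g (insert b C) - p * opt ≤
      Real.exp (-(w b) / opt) * (g Finset.univ - g C - p * opt) := by
  obtain ⟨t, v, hinj, hmem, heq, -, hbound⟩ := hii
  have hwb : (0:ℝ) < w b := lt_of_lt_of_le one_pos (hw1 b)
  set r := (g (insert b C) - g C) / w b with hr
  have hr0 : 0 ≤ r := div_nonneg (by linarith [hmono (Finset.subset_insert b C)]) hwb.le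
  have hopt0 : 0 ≤ opt := by
    rw [hopt]; exact Finset.sum_nonneg fun x _ => by linarith [hw1 x]
  have hpo : 0 ≤ p * opt := mul_nonneg hp hopt0
  have hne : Cstar.Nonempty := by
    rcases Cstar.eq_empty_or_nonempty with h | h
    · exfalso; rw [h, hempty] at hfeas; linarith [hnonneg C]
    · exact h
  have hopt1 : (1:ℝ) ≤ opt := by
    rw [hopt]
    obtain ⟨x, hx⟩ := hne
    calc (1:ℝ) ≤ w x := hw1 x
      _ ≤ ∑ v ∈ Cstar, w v :=
        Finset.single_le_sum (fun i _ => by linarith [hw1 i]) hx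
  have hinj' : Set.InjOn v (Finset.range t : Set ℕ) := by
    intro a ha b hb hab
    exact hinj (by simpa using ha) (by simpa using hb) hab
  have tele : g Finset.univ - g C =
      ∑ i ∈ Finset.range t,
        (g (C ∪ (Finset.range (i+1)).image v) - g (C ∪ (Finset.range i).image v)) := by
    rw [Finset.sum_range_sub (fun i => g (C ∪ (Finset.range i).image v))]
    simp [heq]
  have step : ∀ i < t,
      g (C ∪ (Finset.range (i+1)).image v) - g (C ∪ (Finset.range i).image v)
        ≤ w (v i) * r + p := by
    intro i hi
    have h1 := hbound i hi
    have h2 : (g (insert (v i) C) - g C) / w (v i) ≤ r := by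
      apply hbmax
      simp only [Finset.mem_sdiff, Finset.mem_univ, true_and]
      exact (Finset.mem_sdiff.mp (hmem i hi)).2
    have hwv : 0 < w (v i) := lt_of_lt_of_le one_pos (hw1 _)
    have h3 := (div_le_iff₀ hwv).mp h2
    linarith [mul_comm (w (v i)) r]
  have hsub : (Finset.range t).image v ⊆ Cstar := by
    intro x hx
    obtain ⟨i, hi, rfl⟩ := Finset.mem_image.mp hx
    exact (Finset.mem_sdiff.mp (hmem i (Finset.mem_range.mp hi))).1
  have sum1 : ∑ i ∈ Finset.range t, w (v i) ≤ opt := by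
    rw [hopt, ← Finset.sum_image (fun a ha b hb hab => hinj' ha hb hab)]
    exact Finset.sum_le_sum_of_subset_of_nonneg hsub
      (fun x _ _ => by linarith [hw1 x])
  have sumt : (t:ℝ) ≤ opt := by
    have hc : ((Finset.range t).image v).card = t := by
      rw [Finset.card_image_of_injOn hinj', Finset.card_range]
    have h1 : (t:ℝ) ≤ (Cstar.card : ℝ) := by
      exact_mod_cast hc ▸ Finset.card_le_card hsub
    have h2 : (Cstar.card : ℝ) ≤ opt := by
      rw [hopt]
      calc (Cstar.card : ℝ) = ∑ _x ∈ Cstar, (1:ℝ) := by simp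
        _ ≤ ∑ x ∈ Cstar, w x := Finset.sum_le_sum (fun x _ => hw1 x)
    linarith
  have key : g Finset.univ - g C ≤ opt * r + opt * p := by
    calc g Finset.univ - g C = _ := tele
      _ ≤ ∑ i ∈ Finset.range t, (w (v i) * r + p) :=
        Finset.sum_le_sum (fun i hi => step i (Finset.mem_range.mp hi))
      _ = (∑ i ∈ Finset.range t, w (v i)) * r + (t:ℝ) * p := by
        rw [Finset.sum_add_distrib, ← Finset.sum_mul]
        simp [mul_comm]
      _ ≤ opt * r + opt * p := by
        have h1 : (∑ i ∈ Finset.range t, w (v i)) * r ≤ opt * r :=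
          mul_le_mul_of_nonneg_right sum1 hr0
        have h2 : (t:ℝ) * p ≤ opt * p := mul_le_mul_of_nonneg_right sumt hp
        linarith
  set α := g Finset.univ - g C - p * opt with hα'
  have hoptpos : (0:ℝ) < opt := by linarith
  have hrge : α / opt ≤ r := by
    rw [div_le_iff₀ hoptpos]
    nlinarith [key]
  have hgain : g (insert b C) - g C = w b * r := by
    rw [hr]; field_simp [hwb.ne']
  have hexp : 1 - w b / opt ≤ Real.exp (-(w b) / opt) := by
    have := Real.add_one_le_exp (-(w b / opt))
    rw [neg_div]
    linarith
  have hstep2 : g Finset.univ - g (insert b C) - p * opt ≤ α * (1 - w b / opt) := by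
    have h1 : α / opt * w b ≤ r * w b := mul_le_mul_of_nonneg_right hrge hwb.le
    have h2 : α / opt * w b = α * (w b / opt) := by ring
    have h3 : g Finset.univ - g (insert b C) - p * opt = α - w b * r := by
      rw [hα']; linarith [hgain]
    nlinarith
  calc g Finset.univ - g (insert b C) - p * opt ≤ α * (1 - w b / opt) := hstep2
    _ ≤ α * Real.exp (-(w b) / opt) := mul_le_mul_of_nonneg_left hexp (le_of_lt hα)
    _ = Real.exp (-(w b) / opt) * α := mul_comm _ _
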